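/- The Baxter numbers B_n = Σ_{k=1}^n (2/(n(n+1)^2)) C(n+1,k-1) C(n+1,k) C(n+1,k+1) satisfy the recurrence (n+4)(n+5) B_{n+2} = (7n^2+35n+40) B_{n+1} + 8n(n+1) B_n for all n ≥ 1. -/

import Mathlib

open Finset

/-- The Baxter numbers. -/
def baxter (n : ℕ) : ℚ :=
  ∑ k ∈ Finset.Icc 1 n,
    2 / ((n : ℚ) * ((n : ℚ) + 1) ^ 2) * ((n + 1).choose (k - 1) : ℚ) *
      ((n + 1).choose k : ℚ) * ((n + 1).choose (k + 1) : ℚ)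

namespace BaxterAux

/-- The shifted summand. -/
def Fq (m i : ℕ) : ℚ :=
  ((m + 1).choose i : ℚ) * ((m + 1).choose (i + 1) : ℚ) * ((m + 1).choose (i + 2) : ℚ)

/-- The telescoping certificate. -/
def Wq (n j : ℕ) : ℚ :=
  -8 * ((n + 1).choose j : ℚ) * ((n + 1).choose (j + 1) : ℚ) * ((n + 1).choose (j + 2) : ℚ)
    - ((n : ℚ) + 4) * ((n : ℚ) + 5) * ((n + 1).choose j : ℚ) * ((n + 1).choose (j + 1) : ℚ) *
        ((n + 2).choose (j + 2) : ℚ)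
    + 2 * ((n : ℚ) + 1) * ((n : ℚ) + 5) * ((n + 1).choose j : ℚ) * ((n + 2).choose (j + 1) : ℚ) *
        ((n + 1).choose (j + 2) : ℚ)
    - ((n : ℚ) + 1) * ((n : ℚ) + 2) * ((n + 2).choose j : ℚ) * ((n + 1).choose (j + 1) : ℚ) *
        ((n + 1).choose (j + 2) : ℚ)

lemma r1 (m t : ℕ) :
    ((t : ℚ) + 1) * (m.choose (t + 1) : ℚ) = ((m : ℚ) - t) * (m.choose t : ℚ) := by
  rcases le_or_gt t m with h | h
  · have h1 := Nat.choose_succ_right_eq m t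
    have h2 := congrArg (Nat.cast : ℕ → ℚ) h1
    push_cast [Nat.cast_sub h] at h2
    linarith
  · have h1 : m.choose (t + 1) = 0 := Nat.choose_eq_zero_of_lt (by omega)
    have h2 : m.choose t = 0 := Nat.choose_eq_zero_of_lt h
    simp [h1, h2]

lemma pascalq (m t : ℕ) :
    (((m + 1).choose (t + 1) : ℕ) : ℚ) = (m.choose t : ℚ) + (m.choose (t + 1) : ℚ) := by
  exact_mod_cast Nat.choose_succ_succ m t

lemma ch2 (m : ℕ) : ((m.choose 2 : ℕ) : ℚ) = (m : ℚ) * ((m : ℚ) - 1) / 2 := by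
  induction m with
  | zero => simp
  | succ t ih =>
    have h : (t + 1).choose 2 = t.choose 1 + t.choose 2 := Nat.choose_succ_succ t 1
    rw [h]
    push_cast [Nat.choose_one_right]
    rw [ih]
    push_cast
    ring

lemma baxter_eq (m : ℕ) :
    baxter m = 2 / ((m : ℚ) * ((m : ℚ) + 1) ^ 2) * ∑ i ∈ Finset.range m, Fq m i := by
  rw [baxter, ← Finset.Ico_add_one_right_eq_Icc, Finset.sum_Ico_eq_sum_range, Finset.mul_sum]
  have hm : m + 1 - 1 = m := by omega
  rw [hm]
  refine Finset.sum_congr rfl fun i _ => ?_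
  have e1 : 1 + i - 1 = i := by omega
  have e3 : 1 + i + 1 = i + 2 := by omega
  have e2 : 1 + i = i + 1 := by omega
  rw [e1, e3, e2, Fq]
  ring

set_option maxHeartbeats 1600000 in
lemma key (n j : ℕ) (hj : j ≤ n) :
    2 * ((n : ℚ) + 1) * ((n : ℚ) + 2) * ((n : ℚ) + 4) * ((n : ℚ) + 5) * Fq (n + 2) (j + 1)
      - 2 * (7 * (n : ℚ) ^ 2 + 35 * (n : ℚ) + 40) * ((n : ℚ) + 3) ^ 2 * Fq (n + 1) (j + 1)
      - 16 * ((n : ℚ) + 2) ^ 2 * ((n : ℚ) + 3) ^ 2 * Fq n (j + 1)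
    = ((n : ℚ) + 2) ^ 2 * ((n : ℚ) + 3) ^ 2 * (Wq n (j + 1) - Wq n j) := by
  have hjq : (j : ℚ) ≤ n := by exact_mod_cast hj
  have en1 : n + 2 + 1 = n + 3 := by omega
  have en2 : n + 1 + 1 = n + 2 := by omega
  have ej1 : j + 1 + 1 = j + 2 := by omega
  have ej2 : j + 1 + 2 = j + 3 := by omega
  have ej3 : j + 2 + 1 = j + 3 := by omega
  simp only [Fq, Wq, en1, en2, ej1, ej2]
  have p31 : (((n + 3).choose (j + 1) : ℕ) : ℚ)
      = ((n + 2).choose j : ℚ) + ((n + 2).choose (j + 1) : ℚ) := pascalq (n + 2) j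
  have p32 : (((n + 3).choose (j + 2) : ℕ) : ℚ)
      = ((n + 2).choose (j + 1) : ℚ) + ((n + 2).choose (j + 2) : ℚ) := by
    have := pascalq (n + 2) (j + 1); rwa [ej1] at this
  have p33 : (((n + 3).choose (j + 3) : ℕ) : ℚ)
      = ((n + 2).choose (j + 2) : ℚ) + ((n + 2).choose (j + 3) : ℚ) := by
    have := pascalq (n + 2) (j + 2); rwa [ej3] at this
  have p21 : (((n + 2).choose (j + 1) : ℕ) : ℚ)
      = ((n + 1).choose j : ℚ) + ((n + 1).choose (j + 1) : ℚ) := pascalq (n + 1) j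
  have p22 : (((n + 2).choose (j + 2) : ℕ) : ℚ)
      = ((n + 1).choose (j + 1) : ℚ) + ((n + 1).choose (j + 2) : ℚ) := by
    have := pascalq (n + 1) (j + 1); rwa [ej1] at this
  have p23 : (((n + 2).choose (j + 3) : ℕ) : ℚ)
      = ((n + 1).choose (j + 2) : ℚ) + ((n + 1).choose (j + 3) : ℚ) := by
    have := pascalq (n + 1) (j + 2); rwa [ej3] at this
  rw [p31, p32, p33, p21, p22, p23]
  set a0 : ℚ := (((n + 1).choose j : ℕ) : ℚ) with ha0
  set a1 : ℚ := (((n + 1).choose (j + 1) : ℕ) : ℚ) with ha1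
  set a2 : ℚ := (((n + 1).choose (j + 2) : ℕ) : ℚ) with ha2
  set a3 : ℚ := (((n + 1).choose (j + 3) : ℕ) : ℚ) with ha3
  set b0 : ℚ := (((n + 2).choose j : ℕ) : ℚ) with hb0
  have h1 : ((j : ℚ) + 1) * a1 = ((n : ℚ) + 1 - (j : ℚ)) * a0 := by
    rw [ha1, ha0]
    have h := r1 (n + 1) j
    push_cast at h
    linarith
  have h2 : ((j : ℚ) + 2) * a2 = ((n : ℚ) - (j : ℚ)) * a1 := by
    rw [ha2, ha1]
    have h := r1 (n + 1) (j + 1)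
    rw [ej1] at h
    push_cast at h
    linarith
  have h3 : ((j : ℚ) + 3) * a3 = ((n : ℚ) - (j : ℚ) - 1) * a2 := by
    rw [ha3, ha2]
    have h := r1 (n + 1) (j + 2)
    rw [ej3] at h
    push_cast at h
    linarith
  have h4 : ((n : ℚ) + 2 - (j : ℚ)) * b0 = ((n : ℚ) + 2) * a0 := by
    rw [hb0, ha0]
    have hA := r1 (n + 2) j
    have hB := congrArg (Nat.cast : ℕ → ℚ) (Nat.add_one_mul_choose_eq (n + 1) j)
    push_cast at hA hB
    linarith
  have d1 : ((j : ℚ) + 1) ≠ 0 := by positivity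
  have d2 : ((j : ℚ) + 2) ≠ 0 := by positivity
  have d3 : ((j : ℚ) + 3) ≠ 0 := by positivity
  have d4 : ((n : ℚ) + 2 - (j : ℚ)) ≠ 0 := by
    have h0 : (0 : ℚ) < (n : ℚ) + 2 - (j : ℚ) := by linarith
    exact h0.ne'
  have hM : ((n : ℚ) + 2 - (j : ℚ)) * ((j : ℚ) + 3) * ((j : ℚ) + 2) ^ 2 * ((j : ℚ) + 1) ^ 3
      ≠ 0 :=
    mul_ne_zero (mul_ne_zero (mul_ne_zero d4 d3) (pow_ne_zero _ d2)) (pow_ne_zero _ d1)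
  apply mul_left_cancel₀ hM
  linear_combination
      (3840 * a1^2 - 3840 * a0 * a1 + 11040 * (j:ℚ) * a1^2 - 12000 * (j:ℚ) * a0 * a1 + 9792 * (j:ℚ)^2 * a1^2 - 11520 * (j:ℚ)^2 * a0 * a1 + 1320 * (j:ℚ)^3 * a1^2 - 600 * (j:ℚ)^3 * a0 * a1 - 1992 * (j:ℚ)^4 * a1^2 + 4920 * (j:ℚ)^4 * a0 * a1 - 936 * (j:ℚ)^5 * a1^2 + 2520 * (j:ℚ)^5 * a0 * a1 - 216 * (j:ℚ)^6 * a1^2 + 360 * (j:ℚ)^6 * a0 * a1 + 9248 * (n:ℚ) * a1^2 - 13088 * (n:ℚ) * a0 * a1 + 26192 * (n:ℚ) * (j:ℚ) * a1^2 - 42400 * (n:ℚ) * (j:ℚ) * a0 * a1 + 23112 * (n:ℚ) * (j:ℚ)^2 * a1^2 - 44904 * (n:ℚ) * (j:ℚ)^2 * a0 * a1 + 4412 * (n:ℚ) * (j:ℚ)^3 * a1^2 - 10160 * (n:ℚ) * (j:ℚ)^3 * a0 * a1 - 2236 * (n:ℚ) * (j:ℚ)^4 * a1^2 + 11264 * (n:ℚ)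 * (j:ℚ)^4 * a0 * a1 - 732 * (n:ℚ) * (j:ℚ)^5 * a1^2 + 6864 * (n:ℚ) * (j:ℚ)^5 * a0 * a1 - 252 * (n:ℚ) * (j:ℚ)^6 * a1^2 + 1032 * (n:ℚ) * (j:ℚ)^6 * a0 * a1 + 10000 * (n:ℚ)^2 * a1^2 - 18384 * (n:ℚ)^2 * a0 * a1 + 27616 * (n:ℚ)^2 * (j:ℚ) * a1^2 - 61760 * (n:ℚ)^2 * (j:ℚ) * a0 * a1 + 23068 * (n:ℚ)^2 * (j:ℚ)^2 * a1^2 - 71360 * (n:ℚ)^2 * (j:ℚ)^2 * a0 * a1 + 3502 * (n:ℚ)^2 * (j:ℚ)^3 * a1^2 - 26198 * (n:ℚ)^2 * (j:ℚ)^3 * a0 * a1 - 1742 * (n:ℚ)^2 * (j:ℚ)^4 * a1^2 + 7726 * (n:ℚ)^2 * (j:ℚ)^4 * a0 * a1 + 202 * (n:ℚ)^2 * (j:ℚ)^5 * a1^2 + 7102 * (n:ℚ)^2 * (j:ℚ)^5 * a0 * a1 - 6 * (n:ℚ)^2 * (j:ℚ)^6 * a1^2 + 1162 * (n:ℚ)^2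 * (j:ℚ)^6 * a0 * a1 + 6528 * (n:ℚ)^3 * a1^2 - 13864 * (n:ℚ)^3 * a0 * a1 + 17936 * (n:ℚ)^3 * (j:ℚ) * a1^2 - 48192 * (n:ℚ)^3 * (j:ℚ) * a0 * a1 + 14430 * (n:ℚ)^3 * (j:ℚ)^2 * a1^2 - 59898 * (n:ℚ)^3 * (j:ℚ)^2 * a0 * a1 + 1065 * (n:ℚ)^3 * (j:ℚ)^3 * a1^2 - 28518 * (n:ℚ)^3 * (j:ℚ)^3 * a0 * a1 - 1945 * (n:ℚ)^3 * (j:ℚ)^4 * a1^2 - 126 * (n:ℚ)^3 * (j:ℚ)^4 * a0 * a1 + 123 * (n:ℚ)^3 * (j:ℚ)^5 * a1^2 + 3486 * (n:ℚ)^3 * (j:ℚ)^5 * a0 * a1 + 111 * (n:ℚ)^3 * (j:ℚ)^6 * a1^2 + 664 * (n:ℚ)^3 * (j:ℚ)^6 * a0 * a1 + 2728 * (n:ℚ)^4 * a1^2 - 6076 * (n:ℚ)^4 * a0 * a1 + 7950 * (n:ℚ)^4 * (j:ℚ) * a1^2 - 21778 * (n:ℚ)^4 * (j:ℚ) * a0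 * a1 + 7101 * (n:ℚ)^4 * (j:ℚ)^2 * a1^2 - 28726 * (n:ℚ)^4 * (j:ℚ)^2 * a0 * a1 + 944 * (n:ℚ)^4 * (j:ℚ)^3 * a1^2 - 16066 * (n:ℚ)^4 * (j:ℚ)^3 * a0 * a1 - 1194 * (n:ℚ)^4 * (j:ℚ)^4 * a1^2 - 2482 * (n:ℚ)^4 * (j:ℚ)^4 * a0 * a1 - 198 * (n:ℚ)^4 * (j:ℚ)^5 * a1^2 + 764 * (n:ℚ)^4 * (j:ℚ)^5 * a0 * a1 + 61 * (n:ℚ)^4 * (j:ℚ)^6 * a1^2 + 204 * (n:ℚ)^4 * (j:ℚ)^6 * a0 * a1 + 594 * (n:ℚ)^5 * a1^2 - 1548 * (n:ℚ)^5 * a0 * a1 + 2095 * (n:ℚ)^5 * (j:ℚ) * a1^2 - 5698 * (n:ℚ)^5 * (j:ℚ) * a0 * a1 + 2534 * (n:ℚ)^5 * (j:ℚ)^2 * a1^2 - 7882 * (n:ℚ)^5 * (j:ℚ)^2 * a0 * a1 + 985 * (n:ℚ)^5 * (j:ℚ)^3 * a1^2 - 4906 * (n:ℚ)^5 * (j:ℚ)^3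 * a0 * a1 - 209 * (n:ℚ)^5 * (j:ℚ)^4 * a1^2 - 1186 * (n:ℚ)^5 * (j:ℚ)^4 * a0 * a1 - 148 * (n:ℚ)^5 * (j:ℚ)^5 * a1^2 + 20 * (n:ℚ)^5 * (j:ℚ)^5 * a0 * a1 + 13 * (n:ℚ)^5 * (j:ℚ)^6 * a1^2 + 32 * (n:ℚ)^5 * (j:ℚ)^6 * a0 * a1 - 35 * (n:ℚ)^6 * a1^2 - 212 * (n:ℚ)^6 * a0 * a1 + 78 * (n:ℚ)^6 * (j:ℚ) * a1^2 - 798 * (n:ℚ)^6 * (j:ℚ) * a0 * a1 + 405 * (n:ℚ)^6 * (j:ℚ)^2 * a1^2 - 1146 * (n:ℚ)^6 * (j:ℚ)^2 * a0 * a1 + 398 * (n:ℚ)^6 * (j:ℚ)^3 * a1^2 - 768 * (n:ℚ)^6 * (j:ℚ)^3 * a0 * a1 + 69 * (n:ℚ)^6 * (j:ℚ)^4 * a1^2 - 228 * (n:ℚ)^6 * (j:ℚ)^4 * a0 * a1 - 36 * (n:ℚ)^6 * (j:ℚ)^5 * a1^2 - 18 * (n:ℚ)^6 * (j:ℚ)^5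 * a0 * a1 + 1 * (n:ℚ)^6 * (j:ℚ)^6 * a1^2 + 2 * (n:ℚ)^6 * (j:ℚ)^6 * a0 * a1 - 57 * (n:ℚ)^7 * a1^2 - 12 * (n:ℚ)^7 * a0 * a1 - 132 * (n:ℚ)^7 * (j:ℚ) * a1^2 - 46 * (n:ℚ)^7 * (j:ℚ) * a0 * a1 - 57 * (n:ℚ)^7 * (j:ℚ)^2 * a1^2 - 68 * (n:ℚ)^7 * (j:ℚ)^2 * a0 * a1 + 51 * (n:ℚ)^7 * (j:ℚ)^3 * a1^2 - 48 * (n:ℚ)^7 * (j:ℚ)^3 * a0 * a1 + 30 * (n:ℚ)^7 * (j:ℚ)^4 * a1^2 - 16 * (n:ℚ)^7 * (j:ℚ)^4 * a0 * a1 - 3 * (n:ℚ)^7 * (j:ℚ)^5 * a1^2 - 2 * (n:ℚ)^7 * (j:ℚ)^5 * a0 * a1 - 13 * (n:ℚ)^8 * a1^2 - 36 * (n:ℚ)^8 * (j:ℚ) * a1^2 - 30 * (n:ℚ)^8 * (j:ℚ)^2 * a1^2 - 4 * (n:ℚ)^8 * (j:ℚ)^3 * a1^2 + 3 * (n:ℚ)^8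 * (j:ℚ)^4 * a1^2 - 1 * (n:ℚ)^9 * a1^2 - 3 * (n:ℚ)^9 * (j:ℚ) * a1^2 - 3 * (n:ℚ)^9 * (j:ℚ)^2 * a1^2 - 1 * (n:ℚ)^9 * (j:ℚ)^3 * a1^2) * h1
      + (3904 * a1 * a2 - 160 * a1^2 - 2848 * a0 * a2 - 4480 * a0 * a1 + 7520 * a0^2 + 14336 * (j:ℚ) * a1 * a2 - 32 * (j:ℚ) * a1^2 - 7392 * (j:ℚ) * a0 * a2 - 11008 * (j:ℚ) * a0 * a1 + 25440 * (j:ℚ) * a0^2 + 18608 * (j:ℚ)^2 * a1 * a2 + 568 * (j:ℚ)^2 * a1^2 - 3816 * (j:ℚ)^2 * a0 * a2 - 5152 * (j:ℚ)^2 * a0 * a1 + 29880 * (j:ℚ)^2 * a0^2 + 8192 * (j:ℚ)^3 * a1 * a2 + 352 * (j:ℚ)^3 * a1^2 + 4416 * (j:ℚ)^3 * a0 * a2 + 6128 * (j:ℚ)^3 * a0 * a1 + 11760 * (j:ℚ)^3 * a0^2 - 2272 * (j:ℚ)^4 * a1 * a2 - 272 * (j:ℚ)^4 * a1^2 + 4944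 * (j:ℚ)^4 * a0 * a2 + 6416 * (j:ℚ)^4 * a0 * a1 - 2400 * (j:ℚ)^4 * a0^2 - 2944 * (j:ℚ)^5 * a1 * a2 - 128 * (j:ℚ)^5 * a1^2 + 1248 * (j:ℚ)^5 * a0 * a2 + 2000 * (j:ℚ)^5 * a0 * a1 - 2640 * (j:ℚ)^5 * a0^2 - 656 * (j:ℚ)^6 * a1 * a2 + 56 * (j:ℚ)^6 * a1^2 - 8 * (j:ℚ)^6 * a0 * a2 + 336 * (j:ℚ)^6 * a0 * a1 - 440 * (j:ℚ)^6 * a0^2 + 11536 * (n:ℚ) * a1 * a2 + 1552 * (n:ℚ) * a1^2 - 6928 * (n:ℚ) * a0 * a2 - 8880 * (n:ℚ) * a0 * a1 + 23024 * (n:ℚ) * a0^2 + 42656 * (n:ℚ) * (j:ℚ) * a1 * a2 + 6384 * (n:ℚ) * (j:ℚ) * a1^2 - 19264 * (n:ℚ) * (j:ℚ) * a0 * a2 - 20752 * (n:ℚ) * (j:ℚ) * a0 * a1 + 79088 * (n:ℚ) * (j:ℚ) * a0^2 + 57012 * (n:ℚ) * (j:ℚ)^2 * a1 * a2 + 8724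 * (n:ℚ) * (j:ℚ)^2 * a1^2 - 13588 * (n:ℚ) * (j:ℚ)^2 * a0 * a2 - 8348 * (n:ℚ) * (j:ℚ)^2 * a0 * a1 + 95996 * (n:ℚ) * (j:ℚ)^2 * a0^2 + 29020 * (n:ℚ) * (j:ℚ)^3 * a1 * a2 + 3328 * (n:ℚ) * (j:ℚ)^3 * a1^2 + 5612 * (n:ℚ) * (j:ℚ)^3 * a0 * a2 + 10944 * (n:ℚ) * (j:ℚ)^3 * a0 * a1 + 42512 * (n:ℚ) * (j:ℚ)^3 * a0^2 - 1492 * (n:ℚ) * (j:ℚ)^4 * a1 * a2 - 1800 * (n:ℚ) * (j:ℚ)^4 * a1^2 + 9644 * (n:ℚ) * (j:ℚ)^4 * a0 * a2 + 8600 * (n:ℚ) * (j:ℚ)^4 * a0 * a1 - 2920 * (n:ℚ) * (j:ℚ)^4 * a0^2 - 6060 * (n:ℚ) * (j:ℚ)^5 * a1 * a2 - 1296 * (n:ℚ) * (j:ℚ)^5 * a1^2 + 2852 * (n:ℚ) * (j:ℚ)^5 * a0 * a2 + 1456 * (n:ℚ) * (j:ℚ)^5 * a0 * a1 - 6688 *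 (n:ℚ) * (j:ℚ)^5 * a0^2 - 1440 * (n:ℚ) * (j:ℚ)^6 * a1 * a2 - 60 * (n:ℚ) * (j:ℚ)^6 * a1^2 + 72 * (n:ℚ) * (j:ℚ)^6 * a0 * a2 + 276 * (n:ℚ) * (j:ℚ)^6 * a0 * a1 - 1188 * (n:ℚ) * (j:ℚ)^6 * a0^2 + 14088 * (n:ℚ)^2 * a1 * a2 + 3024 * (n:ℚ)^2 * a1^2 - 7280 * (n:ℚ)^2 * a0 * a2 - 9128 * (n:ℚ)^2 * a0 * a1 + 28744 * (n:ℚ)^2 * a0^2 + 52604 * (n:ℚ)^2 * (j:ℚ) * a1 * a2 + 11912 * (n:ℚ)^2 * (j:ℚ) * a1^2 - 22132 * (n:ℚ)^2 * (j:ℚ) * a0 * a2 - 21556 * (n:ℚ)^2 * (j:ℚ) * a0 * a1 + 100460 * (n:ℚ)^2 * (j:ℚ) * a0^2 + 72400 * (n:ℚ)^2 * (j:ℚ)^2 * a1 * a2 + 16650 * (n:ℚ)^2 * (j:ℚ)^2 * a1^2 - 20658 * (n:ℚ)^2 * (j:ℚ)^2 * a0 * a2 - 10122 * (n:ℚ)^2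 * (j:ℚ)^2 * a0 * a1 + 126324 * (n:ℚ)^2 * (j:ℚ)^2 * a0^2 + 41190 * (n:ℚ)^2 * (j:ℚ)^3 * a1 * a2 + 8528 * (n:ℚ)^2 * (j:ℚ)^3 * a1^2 - 1790 * (n:ℚ)^2 * (j:ℚ)^3 * a0 * a2 + 7556 * (n:ℚ)^2 * (j:ℚ)^3 * a0 * a1 + 62392 * (n:ℚ)^2 * (j:ℚ)^3 * a0^2 + 3890 * (n:ℚ)^2 * (j:ℚ)^4 * a1 * a2 - 556 * (n:ℚ)^2 * (j:ℚ)^4 * a1^2 + 6458 * (n:ℚ)^2 * (j:ℚ)^4 * a0 * a2 + 4760 * (n:ℚ)^2 * (j:ℚ)^4 * a0 * a1 + 2672 * (n:ℚ)^2 * (j:ℚ)^4 * a0^2 - 4682 * (n:ℚ)^2 * (j:ℚ)^5 * a1 * a2 - 1512 * (n:ℚ)^2 * (j:ℚ)^5 * a1^2 + 2634 * (n:ℚ)^2 * (j:ℚ)^5 * a0 * a2 - 624 * (n:ℚ)^2 * (j:ℚ)^5 * a0 * a1 - 6372 * (n:ℚ)^2 * (j:ℚ)^5 * a0^2 - 1266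 * (n:ℚ)^2 * (j:ℚ)^6 * a1 * a2 - 190 * (n:ℚ)^2 * (j:ℚ)^6 * a1^2 + 192 * (n:ℚ)^2 * (j:ℚ)^6 * a0 * a2 - 134 * (n:ℚ)^2 * (j:ℚ)^6 * a0 * a1 - 1260 * (n:ℚ)^2 * (j:ℚ)^6 * a0^2 + 9332 * (n:ℚ)^3 * a1 * a2 + 2056 * (n:ℚ)^3 * a1^2 - 3860 * (n:ℚ)^3 * a0 * a2 - 6368 * (n:ℚ)^3 * a0 * a1 + 19268 * (n:ℚ)^3 * a0^2 + 35160 * (n:ℚ)^3 * (j:ℚ) * a1 * a2 + 8360 * (n:ℚ)^3 * (j:ℚ) * a1^2 - 13036 * (n:ℚ)^3 * (j:ℚ) * a0 * a2 - 16630 * (n:ℚ)^3 * (j:ℚ) * a0 * a1 + 68582 * (n:ℚ)^3 * (j:ℚ) * a0^2 + 49583 * (n:ℚ)^3 * (j:ℚ)^2 * a1 * a2 + 12609 * (n:ℚ)^3 * (j:ℚ)^2 * a1^2 - 15377 * (n:ℚ)^3 * (j:ℚ)^2 * a0 * a2 - 11784 * (n:ℚ)^3 * (j:ℚ)^2 *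 a0 * a1 + 89334 * (n:ℚ)^3 * (j:ℚ)^2 * a0^2 + 30532 * (n:ℚ)^3 * (j:ℚ)^3 * a1 * a2 + 8068 * (n:ℚ)^3 * (j:ℚ)^3 * a1^2 - 6348 * (n:ℚ)^3 * (j:ℚ)^3 * a0 * a2 + 494 * (n:ℚ)^3 * (j:ℚ)^3 * a0 * a1 + 48502 * (n:ℚ)^3 * (j:ℚ)^3 * a0^2 + 5718 * (n:ℚ)^3 * (j:ℚ)^4 * a1 * a2 + 1310 * (n:ℚ)^3 * (j:ℚ)^4 * a1^2 + 758 * (n:ℚ)^3 * (j:ℚ)^4 * a0 * a2 + 1406 * (n:ℚ)^3 * (j:ℚ)^4 * a0 * a1 + 6302 * (n:ℚ)^3 * (j:ℚ)^4 * a0^2 - 1636 * (n:ℚ)^3 * (j:ℚ)^5 * a1 * a2 - 612 * (n:ℚ)^3 * (j:ℚ)^5 * a1^2 + 1072 * (n:ℚ)^3 * (j:ℚ)^5 * a0 * a2 - 864 * (n:ℚ)^3 * (j:ℚ)^5 * a0 * a1 - 2868 * (n:ℚ)^3 * (j:ℚ)^5 * a0^2 - 577 * (n:ℚ)^3 * (j:ℚ)^6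 * a1 * a2 - 159 * (n:ℚ)^3 * (j:ℚ)^6 * a1^2 + 167 * (n:ℚ)^3 * (j:ℚ)^6 * a0 * a2 - 254 * (n:ℚ)^3 * (j:ℚ)^6 * a0 * a1 - 688 * (n:ℚ)^3 * (j:ℚ)^6 * a0^2 + 3658 * (n:ℚ)^4 * a1 * a2 + 546 * (n:ℚ)^4 * a1^2 - 766 * (n:ℚ)^4 * a0 * a2 - 2770 * (n:ℚ)^4 * a0 * a1 + 7576 * (n:ℚ)^4 * a0^2 + 13879 * (n:ℚ)^4 * (j:ℚ) * a1 * a2 + 2446 * (n:ℚ)^4 * (j:ℚ) * a1^2 - 3175 * (n:ℚ)^4 * (j:ℚ) * a0 * a2 - 8344 * (n:ℚ)^4 * (j:ℚ) * a0 * a1 + 27480 * (n:ℚ)^4 * (j:ℚ) * a0^2 + 19937 * (n:ℚ)^4 * (j:ℚ)^2 * a1 * a2 + 4251 * (n:ℚ)^4 * (j:ℚ)^2 * a1^2 - 5042 * (n:ℚ)^4 * (j:ℚ)^2 * a0 * a2 - 8229 * (n:ℚ)^4 * (j:ℚ)^2 * a0 * a1 + 37054 * (n:ℚ)^4 * (j:ℚ)^2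 * a0^2 + 12972 * (n:ℚ)^4 * (j:ℚ)^3 * a1 * a2 + 3472 * (n:ℚ)^4 * (j:ℚ)^3 * a1^2 - 3669 * (n:ℚ)^4 * (j:ℚ)^3 * a0 * a2 - 2447 * (n:ℚ)^4 * (j:ℚ)^3 * a0 * a1 + 21836 * (n:ℚ)^4 * (j:ℚ)^3 * a0^2 + 3214 * (n:ℚ)^4 * (j:ℚ)^4 * a1 * a2 + 1180 * (n:ℚ)^4 * (j:ℚ)^4 * a1^2 - 1015 * (n:ℚ)^4 * (j:ℚ)^4 * a0 * a2 + 143 * (n:ℚ)^4 * (j:ℚ)^4 * a0 * a1 + 4344 * (n:ℚ)^4 * (j:ℚ)^4 * a0^2 - 187 * (n:ℚ)^4 * (j:ℚ)^5 * a1 * a2 - 6 * (n:ℚ)^4 * (j:ℚ)^5 * a1^2 + 88 * (n:ℚ)^4 * (j:ℚ)^5 * a0 * a2 - 189 * (n:ℚ)^4 * (j:ℚ)^5 * a0 * a1 - 548 * (n:ℚ)^4 * (j:ℚ)^5 * a0^2 - 145 * (n:ℚ)^4 * (j:ℚ)^6 * a1 * a2 - 65 * (n:ℚ)^4 * (j:ℚ)^6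 * a1^2 + 67 * (n:ℚ)^4 * (j:ℚ)^6 * a0 * a2 - 124 * (n:ℚ)^4 * (j:ℚ)^6 * a0 * a1 - 206 * (n:ℚ)^4 * (j:ℚ)^6 * a0^2 + 854 * (n:ℚ)^5 * a1 * a2 - 35 * (n:ℚ)^5 * a1^2 + 200 * (n:ℚ)^5 * a0 * a2 - 519 * (n:ℚ)^5 * a0 * a1 + 1760 * (n:ℚ)^5 * a0^2 + 3257 * (n:ℚ)^5 * (j:ℚ) * a1 * a2 - 14 * (n:ℚ)^5 * (j:ℚ) * a1^2 + 430 * (n:ℚ)^5 * (j:ℚ) * a0 * a2 - 2046 * (n:ℚ)^5 * (j:ℚ) * a0 * a1 + 6508 * (n:ℚ)^5 * (j:ℚ) * a0^2 + 4743 * (n:ℚ)^5 * (j:ℚ)^2 * a1 * a2 + 281 * (n:ℚ)^5 * (j:ℚ)^2 * a1^2 - 19 * (n:ℚ)^5 * (j:ℚ)^2 * a0 * a2 - 2885 * (n:ℚ)^5 * (j:ℚ)^2 * a0 * a1 + 9074 * (n:ℚ)^5 * (j:ℚ)^2 * a0^2 + 3208 * (n:ℚ)^5 * (j:ℚ)^3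 * a1 * a2 + 564 * (n:ℚ)^5 * (j:ℚ)^3 * a1^2 - 624 * (n:ℚ)^5 * (j:ℚ)^3 * a0 * a2 - 1595 * (n:ℚ)^5 * (j:ℚ)^3 * a0 * a1 + 5742 * (n:ℚ)^5 * (j:ℚ)^3 * a0^2 + 926 * (n:ℚ)^5 * (j:ℚ)^4 * a1 * a2 + 391 * (n:ℚ)^5 * (j:ℚ)^4 * a1^2 - 458 * (n:ℚ)^5 * (j:ℚ)^4 * a0 * a2 - 150 * (n:ℚ)^5 * (j:ℚ)^4 * a0 * a1 + 1462 * (n:ℚ)^5 * (j:ℚ)^4 * a0^2 + 39 * (n:ℚ)^5 * (j:ℚ)^5 * a1 * a2 + 74 * (n:ℚ)^5 * (j:ℚ)^5 * a1^2 - 70 * (n:ℚ)^5 * (j:ℚ)^5 * a0 * a2 + 61 * (n:ℚ)^5 * (j:ℚ)^5 * a0 * a1 + 14 * (n:ℚ)^5 * (j:ℚ)^5 * a0^2 - 19 * (n:ℚ)^5 * (j:ℚ)^6 * a1 * a2 - 13 * (n:ℚ)^5 * (j:ℚ)^6 * a1^2 + 13 * (n:ℚ)^5 * (j:ℚ)^6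 * a0 * a2 - 26 * (n:ℚ)^5 * (j:ℚ)^6 * a0 * a1 - 32 * (n:ℚ)^5 * (j:ℚ)^6 * a0^2 + 110 * (n:ℚ)^6 * a1 * a2 - 57 * (n:ℚ)^6 * a1^2 + 140 * (n:ℚ)^6 * a0 * a2 + 92 * (n:ℚ)^6 * a0 * a1 + 224 * (n:ℚ)^6 * a0^2 + 421 * (n:ℚ)^6 * (j:ℚ) * a1 * a2 - 202 * (n:ℚ)^6 * (j:ℚ) * a1^2 + 436 * (n:ℚ)^6 * (j:ℚ) * a0 * a2 + 61 * (n:ℚ)^6 * (j:ℚ) * a0 * a1 + 844 * (n:ℚ)^6 * (j:ℚ) * a0^2 + 619 * (n:ℚ)^6 * (j:ℚ)^2 * a1 * a2 - 239 * (n:ℚ)^6 * (j:ℚ)^2 * a1^2 + 443 * (n:ℚ)^6 * (j:ℚ)^2 * a0 * a2 - 334 * (n:ℚ)^6 * (j:ℚ)^2 * a0 * a1 + 1214 * (n:ℚ)^6 * (j:ℚ)^2 * a0^2 + 430 * (n:ℚ)^6 * (j:ℚ)^3 * a1 * a2 - 76 * (n:ℚ)^6 * (j:ℚ)^3 * a1^2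 + 114 * (n:ℚ)^6 * (j:ℚ)^3 * a0 * a2 - 450 * (n:ℚ)^6 * (j:ℚ)^3 * a0 * a1 + 816 * (n:ℚ)^6 * (j:ℚ)^3 * a0^2 + 136 * (n:ℚ)^6 * (j:ℚ)^4 * a1 * a2 + 41 * (n:ℚ)^6 * (j:ℚ)^4 * a1^2 - 56 * (n:ℚ)^6 * (j:ℚ)^4 * a0 * a2 - 116 * (n:ℚ)^6 * (j:ℚ)^4 * a0 * a1 + 244 * (n:ℚ)^6 * (j:ℚ)^4 * a0^2 + 13 * (n:ℚ)^6 * (j:ℚ)^5 * a1 * a2 + 22 * (n:ℚ)^6 * (j:ℚ)^5 * a1^2 - 22 * (n:ℚ)^6 * (j:ℚ)^5 * a0 * a2 + 29 * (n:ℚ)^6 * (j:ℚ)^5 * a0 * a1 + 20 * (n:ℚ)^6 * (j:ℚ)^5 * a0^2 - 1 * (n:ℚ)^6 * (j:ℚ)^6 * a1 * a2 - 1 * (n:ℚ)^6 * (j:ℚ)^6 * a1^2 + 1 * (n:ℚ)^6 * (j:ℚ)^6 * a0 * a2 - 2 * (n:ℚ)^6 * (j:ℚ)^6 * a0 * a1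 - 2 * (n:ℚ)^6 * (j:ℚ)^6 * a0^2 + 6 * (n:ℚ)^7 * a1 * a2 - 13 * (n:ℚ)^7 * a1^2 + 28 * (n:ℚ)^7 * a0 * a2 + 70 * (n:ℚ)^7 * a0 * a1 + 12 * (n:ℚ)^7 * a0^2 + 23 * (n:ℚ)^7 * (j:ℚ) * a1 * a2 - 50 * (n:ℚ)^7 * (j:ℚ) * a1^2 + 94 * (n:ℚ)^7 * (j:ℚ) * a0 * a2 + 169 * (n:ℚ)^7 * (j:ℚ) * a0 * a1 + 46 * (n:ℚ)^7 * (j:ℚ) * a0^2 + 34 * (n:ℚ)^7 * (j:ℚ)^2 * a1 * a2 - 70 * (n:ℚ)^7 * (j:ℚ)^2 * a1^2 + 112 * (n:ℚ)^7 * (j:ℚ)^2 * a0 * a2 + 90 * (n:ℚ)^7 * (j:ℚ)^2 * a0 * a1 + 68 * (n:ℚ)^7 * (j:ℚ)^2 * a0^2 + 24 * (n:ℚ)^7 * (j:ℚ)^3 * a1 * a2 - 40 * (n:ℚ)^7 * (j:ℚ)^3 * a1^2 + 52 * (n:ℚ)^7 * (j:ℚ)^3 * a0 * a2 - 44 * (n:ℚ)^7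 * (j:ℚ)^3 * a0 * a1 + 48 * (n:ℚ)^7 * (j:ℚ)^3 * a0^2 + 8 * (n:ℚ)^7 * (j:ℚ)^4 * a1 * a2 - 5 * (n:ℚ)^7 * (j:ℚ)^4 * a1^2 + 4 * (n:ℚ)^7 * (j:ℚ)^4 * a0 * a2 - 32 * (n:ℚ)^7 * (j:ℚ)^4 * a0 * a1 + 16 * (n:ℚ)^7 * (j:ℚ)^4 * a0^2 + 1 * (n:ℚ)^7 * (j:ℚ)^5 * a1 * a2 + 2 * (n:ℚ)^7 * (j:ℚ)^5 * a1^2 - 2 * (n:ℚ)^7 * (j:ℚ)^5 * a0 * a2 + 3 * (n:ℚ)^7 * (j:ℚ)^5 * a0 * a1 + 2 * (n:ℚ)^7 * (j:ℚ)^5 * a0^2 - 1 * (n:ℚ)^8 * a1^2 + 2 * (n:ℚ)^8 * a0 * a2 + 14 * (n:ℚ)^8 * a0 * a1 - 4 * (n:ℚ)^8 * (j:ℚ) * a1^2 + 7 * (n:ℚ)^8 * (j:ℚ) * a0 * a2 + 39 * (n:ℚ)^8 * (j:ℚ) * a0 * a1 - 6 * (n:ℚ)^8 * (j:ℚ)^2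 * a1^2 + 9 * (n:ℚ)^8 * (j:ℚ)^2 * a0 * a2 + 33 * (n:ℚ)^8 * (j:ℚ)^2 * a0 * a1 - 4 * (n:ℚ)^8 * (j:ℚ)^3 * a1^2 + 5 * (n:ℚ)^8 * (j:ℚ)^3 * a0 * a2 + 5 * (n:ℚ)^8 * (j:ℚ)^3 * a0 * a1 - 1 * (n:ℚ)^8 * (j:ℚ)^4 * a1^2 + 1 * (n:ℚ)^8 * (j:ℚ)^4 * a0 * a2 - 3 * (n:ℚ)^8 * (j:ℚ)^4 * a0 * a1 + 1 * (n:ℚ)^9 * a0 * a1 + 3 * (n:ℚ)^9 * (j:ℚ) * a0 * a1 + 3 * (n:ℚ)^9 * (j:ℚ)^2 * a0 * a1 + 1 * (n:ℚ)^9 * (j:ℚ)^3 * a0 * a1) * h2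
      + (-3968 * a1 * a2 - 7360 * a1^2 - 3904 * a0 * a2 - 2560 * a0 * a1 + 1280 * a0^2 - 13888 * (j:ℚ) * a1 * a2 - 25760 * (j:ℚ) * a1^2 - 13344 * (j:ℚ) * a0 * a2 - 8320 * (j:ℚ) * a0 * a1 + 4800 * (j:ℚ) * a0^2 - 16864 * (j:ℚ)^2 * a1 * a2 - 31280 * (j:ℚ)^2 * a1^2 - 15312 * (j:ℚ)^2 * a0 * a2 - 8320 * (j:ℚ)^2 * a0 * a1 + 6720 * (j:ℚ)^2 * a0^2 - 6448 * (j:ℚ)^3 * a1 * a2 - 11960 * (j:ℚ)^3 * a1^2 - 4344 * (j:ℚ)^3 * a0 * a2 - 160 * (j:ℚ)^3 * a0 * a1 + 4080 * (j:ℚ)^3 * a0^2 + 2480 * (j:ℚ)^4 * a1 * a2 + 4600 * (j:ℚ)^4 * a1^2 + 3960 * (j:ℚ)^4 * a0 * a2 + 4640 * (j:ℚ)^4 * a0 * a1 + 720 * (j:ℚ)^4 * a0^2 + 2480 * (j:ℚ)^5 * a1 * a2 + 4600 * (j:ℚ)^5 * a1^2 + 3000 * (j:ℚ)^5 * a0 *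 a2 + 2720 * (j:ℚ)^5 * a0 * a1 - 240 * (j:ℚ)^5 * a0^2 + 496 * (j:ℚ)^6 * a1 * a2 + 920 * (j:ℚ)^6 * a1^2 + 568 * (j:ℚ)^6 * a0 * a2 + 480 * (j:ℚ)^6 * a0 * a1 - 80 * (j:ℚ)^6 * a0^2 - 7696 * (n:ℚ) * a1 * a2 - 18320 * (n:ℚ) * a1^2 - 6512 * (n:ℚ) * a0 * a2 - 3920 * (n:ℚ) * a0 * a1 + 3136 * (n:ℚ) * a0^2 - 27928 * (n:ℚ) * (j:ℚ) * a1 * a2 - 65960 * (n:ℚ) * (j:ℚ) * a1^2 - 23144 * (n:ℚ) * (j:ℚ) * a0 * a2 - 13112 * (n:ℚ) * (j:ℚ) * a0 * a1 + 11920 * (n:ℚ) * (j:ℚ) * a0^2 - 36676 * (n:ℚ) * (j:ℚ)^2 * a1 * a2 - 85220 * (n:ℚ) * (j:ℚ)^2 * a1^2 - 29084 * (n:ℚ) * (j:ℚ)^2 * a0 * a2 - 14228 * (n:ℚ) * (j:ℚ)^2 * a0 * a1 + 17104 * (n:ℚ) * (j:ℚ)^2 * a0^2 - 18706 * (n:ℚ)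 * (j:ℚ)^3 * a1 * a2 - 41270 * (n:ℚ) * (j:ℚ)^3 * a1^2 - 12782 * (n:ℚ) * (j:ℚ)^3 * a0 * a2 - 2570 * (n:ℚ) * (j:ℚ)^3 * a0 * a1 + 10996 * (n:ℚ) * (j:ℚ)^3 * a0^2 + 98 * (n:ℚ) * (j:ℚ)^4 * a1 * a2 + 2710 * (n:ℚ) * (j:ℚ)^4 * a1^2 + 2398 * (n:ℚ) * (j:ℚ)^4 * a0 * a2 + 5338 * (n:ℚ) * (j:ℚ)^4 * a0 * a1 + 2524 * (n:ℚ) * (j:ℚ)^4 * a0^2 + 3074 * (n:ℚ) * (j:ℚ)^5 * a1 * a2 + 8230 * (n:ℚ) * (j:ℚ)^5 * a1^2 + 3454 * (n:ℚ) * (j:ℚ)^5 * a0 * a2 + 3514 * (n:ℚ) * (j:ℚ)^5 * a0 * a1 - 308 * (n:ℚ) * (j:ℚ)^5 * a0^2 + 714 * (n:ℚ) * (j:ℚ)^6 * a1 * a2 + 1830 * (n:ℚ) * (j:ℚ)^6 * a1^2 + 726 * (n:ℚ) * (j:ℚ)^6 * a0 * a2 + 642 * (n:ℚ) * (j:ℚ)^6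 * a0 * a1 - 156 * (n:ℚ) * (j:ℚ)^6 * a0^2 - 5896 * (n:ℚ)^2 * a1 * a2 - 20056 * (n:ℚ)^2 * a1^2 - 3400 * (n:ℚ)^2 * a0 * a2 - 2408 * (n:ℚ)^2 * a0 * a1 + 2816 * (n:ℚ)^2 * a0^2 - 22064 * (n:ℚ)^2 * (j:ℚ) * a1 * a2 - 73856 * (n:ℚ)^2 * (j:ℚ) * a1^2 - 12648 * (n:ℚ)^2 * (j:ℚ) * a0 * a2 - 8304 * (n:ℚ)^2 * (j:ℚ) * a0 * a1 + 10872 * (n:ℚ)^2 * (j:ℚ) * a0^2 - 30770 * (n:ℚ)^2 * (j:ℚ)^2 * a1 * a2 - 99878 * (n:ℚ)^2 * (j:ℚ)^2 * a1^2 - 17442 * (n:ℚ)^2 * (j:ℚ)^2 * a0 * a2 - 9738 * (n:ℚ)^2 * (j:ℚ)^2 * a0 * a1 + 16032 * (n:ℚ)^2 * (j:ℚ)^2 * a0^2 - 18506 * (n:ℚ)^2 * (j:ℚ)^3 * a1 * a2 - 55466 * (n:ℚ)^2 * (j:ℚ)^3 * a1^2 - 10200 * (n:ℚ)^2 * (j:ℚ)^3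 * a0 * a2 - 3138 * (n:ℚ)^2 * (j:ℚ)^3 * a0 * a1 + 10926 * (n:ℚ)^2 * (j:ℚ)^3 * a0^2 - 3098 * (n:ℚ)^2 * (j:ℚ)^4 * a1 * a2 - 4850 * (n:ℚ)^2 * (j:ℚ)^4 * a1^2 - 1428 * (n:ℚ)^2 * (j:ℚ)^4 * a0 * a2 + 2094 * (n:ℚ)^2 * (j:ℚ)^4 * a0 * a1 + 3066 * (n:ℚ)^2 * (j:ℚ)^4 * a0^2 + 1186 * (n:ℚ)^2 * (j:ℚ)^5 * a1 * a2 + 6130 * (n:ℚ)^2 * (j:ℚ)^5 * a1^2 + 816 * (n:ℚ)^2 * (j:ℚ)^5 * a0 * a2 + 1722 * (n:ℚ)^2 * (j:ℚ)^5 * a0 * a1 + 18 * (n:ℚ)^2 * (j:ℚ)^5 * a0^2 + 380 * (n:ℚ)^2 * (j:ℚ)^6 * a1 * a2 + 1592 * (n:ℚ)^2 * (j:ℚ)^6 * a1^2 + 238 * (n:ℚ)^2 * (j:ℚ)^6 * a0 * a2 + 332 * (n:ℚ)^2 * (j:ℚ)^6 * a0 * a1 - 98 * (n:ℚ)^2 *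 (j:ℚ)^6 * a0^2 - 2240 * (n:ℚ)^3 * a1 * a2 - 12528 * (n:ℚ)^3 * a1^2 + 120 * (n:ℚ)^3 * a0 * a2 - 816 * (n:ℚ)^3 * a0 * a1 + 1168 * (n:ℚ)^3 * a0^2 - 8600 * (n:ℚ)^3 * (j:ℚ) * a1 * a2 - 47032 * (n:ℚ)^3 * (j:ℚ) * a1^2 + 236 * (n:ℚ)^3 * (j:ℚ) * a0 * a2 - 2936 * (n:ℚ)^3 * (j:ℚ) * a0 * a1 + 4576 * (n:ℚ)^3 * (j:ℚ) * a0^2 - 12560 * (n:ℚ)^3 * (j:ℚ)^2 * a1 * a2 - 65980 * (n:ℚ)^3 * (j:ℚ)^2 * a1^2 - 226 * (n:ℚ)^3 * (j:ℚ)^2 * a0 * a2 - 3788 * (n:ℚ)^3 * (j:ℚ)^2 * a0 * a1 + 6916 * (n:ℚ)^3 * (j:ℚ)^2 * a0^2 - 8390 * (n:ℚ)^3 * (j:ℚ)^3 * a1 * a2 - 40258 * (n:ℚ)^3 * (j:ℚ)^3 * a1^2 - 955 * (n:ℚ)^3 * (j:ℚ)^3 * a0 * a2 - 1826 * (n:ℚ)^3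 * (j:ℚ)^3 * a0 * a1 + 4948 * (n:ℚ)^3 * (j:ℚ)^3 * a0^2 - 2210 * (n:ℚ)^3 * (j:ℚ)^4 * a1 * a2 - 7294 * (n:ℚ)^3 * (j:ℚ)^4 * a1^2 - 949 * (n:ℚ)^3 * (j:ℚ)^4 * a0 * a2 + 130 * (n:ℚ)^3 * (j:ℚ)^4 * a0 * a1 + 1588 * (n:ℚ)^3 * (j:ℚ)^4 * a0^2 + 70 * (n:ℚ)^3 * (j:ℚ)^5 * a1 * a2 + 2258 * (n:ℚ)^3 * (j:ℚ)^5 * a1^2 - 397 * (n:ℚ)^3 * (j:ℚ)^5 * a0 * a2 + 370 * (n:ℚ)^3 * (j:ℚ)^5 * a0 * a1 + 124 * (n:ℚ)^3 * (j:ℚ)^5 * a0^2 + 90 * (n:ℚ)^3 * (j:ℚ)^6 * a1 * a2 + 770 * (n:ℚ)^3 * (j:ℚ)^6 * a1^2 - 61 * (n:ℚ)^3 * (j:ℚ)^6 * a0 * a2 + 82 * (n:ℚ)^3 * (j:ℚ)^6 * a0 * a1 - 24 * (n:ℚ)^3 * (j:ℚ)^6 * a0^2 - 424 * (n:ℚ)^4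 * a1 * a2 - 4792 * (n:ℚ)^4 * a1^2 + 812 * (n:ℚ)^4 * a0 * a2 - 168 * (n:ℚ)^4 * a0 * a1 + 224 * (n:ℚ)^4 * a0^2 - 1664 * (n:ℚ)^4 * (j:ℚ) * a1 * a2 - 18312 * (n:ℚ)^4 * (j:ℚ) * a1^2 + 3020 * (n:ℚ)^4 * (j:ℚ) * a0 * a2 - 640 * (n:ℚ)^4 * (j:ℚ) * a0 * a1 + 888 * (n:ℚ)^4 * (j:ℚ) * a0^2 - 2522 * (n:ℚ)^4 * (j:ℚ)^2 * a1 * a2 - 26526 * (n:ℚ)^4 * (j:ℚ)^2 * a1^2 + 4163 * (n:ℚ)^4 * (j:ℚ)^2 * a0 * a2 - 922 * (n:ℚ)^4 * (j:ℚ)^2 * a0 * a1 + 1368 * (n:ℚ)^4 * (j:ℚ)^2 * a0^2 - 1814 * (n:ℚ)^4 * (j:ℚ)^3 * a1 * a2 - 17412 * (n:ℚ)^4 * (j:ℚ)^3 * a1^2 + 2432 * (n:ℚ)^4 * (j:ℚ)^3 * a0 * a2 - 598 * (n:ℚ)^4 * (j:ℚ)^3 * a0 * a1 + 1014 * (n:ℚ)^4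 * (j:ℚ)^3 * a0^2 - 590 * (n:ℚ)^4 * (j:ℚ)^4 * a1 * a2 - 4320 * (n:ℚ)^4 * (j:ℚ)^4 * a1^2 + 338 * (n:ℚ)^4 * (j:ℚ)^4 * a0 * a2 - 142 * (n:ℚ)^4 * (j:ℚ)^4 * a0 * a1 + 354 * (n:ℚ)^4 * (j:ℚ)^4 * a0^2 - 50 * (n:ℚ)^4 * (j:ℚ)^5 * a1 * a2 + 300 * (n:ℚ)^4 * (j:ℚ)^5 * a1^2 - 196 * (n:ℚ)^4 * (j:ℚ)^5 * a0 * a2 + 14 * (n:ℚ)^4 * (j:ℚ)^5 * a0 * a1 + 42 * (n:ℚ)^4 * (j:ℚ)^5 * a0^2 + 8 * (n:ℚ)^4 * (j:ℚ)^6 * a1 * a2 + 214 * (n:ℚ)^4 * (j:ℚ)^6 * a1^2 - 57 * (n:ℚ)^4 * (j:ℚ)^6 * a0 * a2 + 8 * (n:ℚ)^4 * (j:ℚ)^6 * a0 * a1 - 2 * (n:ℚ)^4 * (j:ℚ)^6 * a0^2 - 32 * (n:ℚ)^5 * a1 * a2 - 1112 * (n:ℚ)^5 * a1^2 + 340 *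 (n:ℚ)^5 * a0 * a2 - 16 * (n:ℚ)^5 * a0 * a1 + 16 * (n:ℚ)^5 * a0^2 - 128 * (n:ℚ)^5 * (j:ℚ) * a1 * a2 - 4320 * (n:ℚ)^5 * (j:ℚ) * a1^2 + 1308 * (n:ℚ)^5 * (j:ℚ) * a0 * a2 - 64 * (n:ℚ)^5 * (j:ℚ) * a0 * a1 + 64 * (n:ℚ)^5 * (j:ℚ) * a0^2 - 200 * (n:ℚ)^5 * (j:ℚ)^2 * a1 * a2 - 6438 * (n:ℚ)^5 * (j:ℚ)^2 * a1^2 + 1917 * (n:ℚ)^5 * (j:ℚ)^2 * a0 * a2 - 100 * (n:ℚ)^5 * (j:ℚ)^2 * a0 * a1 + 100 * (n:ℚ)^5 * (j:ℚ)^2 * a0^2 - 152 * (n:ℚ)^5 * (j:ℚ)^3 * a1 * a2 - 4482 * (n:ℚ)^5 * (j:ℚ)^3 * a1^2 + 1290 * (n:ℚ)^5 * (j:ℚ)^3 * a0 * a2 - 76 * (n:ℚ)^5 * (j:ℚ)^3 * a0 * a1 + 76 * (n:ℚ)^5 * (j:ℚ)^3 * a0^2 - 56 * (n:ℚ)^5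 * (j:ℚ)^4 * a1 * a2 - 1338 * (n:ℚ)^5 * (j:ℚ)^4 * a1^2 + 348 * (n:ℚ)^5 * (j:ℚ)^4 * a0 * a2 - 28 * (n:ℚ)^5 * (j:ℚ)^4 * a0 * a1 + 28 * (n:ℚ)^5 * (j:ℚ)^4 * a0^2 - 8 * (n:ℚ)^5 * (j:ℚ)^5 * a1 * a2 - 54 * (n:ℚ)^5 * (j:ℚ)^5 * a1^2 - 6 * (n:ℚ)^5 * (j:ℚ)^5 * a0 * a2 - 4 * (n:ℚ)^5 * (j:ℚ)^5 * a0 * a1 + 4 * (n:ℚ)^5 * (j:ℚ)^5 * a0^2 + 32 * (n:ℚ)^5 * (j:ℚ)^6 * a1^2 - 13 * (n:ℚ)^5 * (j:ℚ)^6 * a0 * a2 - 144 * (n:ℚ)^6 * a1^2 + 60 * (n:ℚ)^6 * a0 * a2 - 568 * (n:ℚ)^6 * (j:ℚ) * a1^2 + 236 * (n:ℚ)^6 * (j:ℚ) * a0 * a2 - 868 * (n:ℚ)^6 * (j:ℚ)^2 * a1^2 + 359 * (n:ℚ)^6 * (j:ℚ)^2 * a0 * a2 - 634 * (n:ℚ)^6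 * (j:ℚ)^3 * a1^2 + 260 * (n:ℚ)^6 * (j:ℚ)^3 * a0 * a2 - 214 * (n:ℚ)^6 * (j:ℚ)^4 * a1^2 + 86 * (n:ℚ)^6 * (j:ℚ)^4 * a0 * a2 - 22 * (n:ℚ)^6 * (j:ℚ)^5 * a1^2 + 8 * (n:ℚ)^6 * (j:ℚ)^5 * a0 * a2 + 2 * (n:ℚ)^6 * (j:ℚ)^6 * a1^2 - 1 * (n:ℚ)^6 * (j:ℚ)^6 * a0 * a2 - 8 * (n:ℚ)^7 * a1^2 + 4 * (n:ℚ)^7 * a0 * a2 - 32 * (n:ℚ)^7 * (j:ℚ) * a1^2 + 16 * (n:ℚ)^7 * (j:ℚ) * a0 * a2 - 50 * (n:ℚ)^7 * (j:ℚ)^2 * a1^2 + 25 * (n:ℚ)^7 * (j:ℚ)^2 * a0 * a2 - 38 * (n:ℚ)^7 * (j:ℚ)^3 * a1^2 + 19 * (n:ℚ)^7 * (j:ℚ)^3 * a0 * a2 - 14 * (n:ℚ)^7 * (j:ℚ)^4 * a1^2 + 7 * (n:ℚ)^7 * (j:ℚ)^4 * a0 * a2 - 2 * (n:ℚ)^7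 * (j:ℚ)^5 * a1^2 + 1 * (n:ℚ)^7 * (j:ℚ)^5 * a0 * a2) * h3
      + (960 * a2 * a3 + 1920 * a2^2 + 1920 * a1 * a3 + 3936 * a1 * a2 + 1920 * a1^2 + 960 * a0 * a3 + 1920 * a0 * a2 + 960 * a0 * a1 + 4160 * (j:ℚ) * a2 * a3 + 8320 * (j:ℚ) * a2^2 + 8320 * (j:ℚ) * a1 * a3 + 17056 * (j:ℚ) * a1 * a2 + 8320 * (j:ℚ) * a1^2 + 4160 * (j:ℚ) * a0 * a3 + 8320 * (j:ℚ) * a0 * a2 + 4160 * (j:ℚ) * a0 * a1 + 7280 * (j:ℚ)^2 * a2 * a3 + 14560 * (j:ℚ)^2 * a2^2 + 14560 * (j:ℚ)^2 * a1 * a3 + 29848 * (j:ℚ)^2 * a1 * a2 + 14560 * (j:ℚ)^2 * a1^2 + 7280 * (j:ℚ)^2 * a0 * a3 + 14560 * (j:ℚ)^2 * a0 * a2 + 7280 * (j:ℚ)^2 * a0 * a1 + 6560 * (j:ℚ)^3 * a2 * a3 + 13120 * (j:ℚ)^3 * a2^2 + 13120 * (j:ℚ)^3 * a1 * a3 + 26896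 * (j:ℚ)^3 * a1 * a2 + 13120 * (j:ℚ)^3 * a1^2 + 6560 * (j:ℚ)^3 * a0 * a3 + 13120 * (j:ℚ)^3 * a0 * a2 + 6560 * (j:ℚ)^3 * a0 * a1 + 3200 * (j:ℚ)^4 * a2 * a3 + 6400 * (j:ℚ)^4 * a2^2 + 6400 * (j:ℚ)^4 * a1 * a3 + 13120 * (j:ℚ)^4 * a1 * a2 + 6400 * (j:ℚ)^4 * a1^2 + 3200 * (j:ℚ)^4 * a0 * a3 + 6400 * (j:ℚ)^4 * a0 * a2 + 3200 * (j:ℚ)^4 * a0 * a1 + 800 * (j:ℚ)^5 * a2 * a3 + 1600 * (j:ℚ)^5 * a2^2 + 1600 * (j:ℚ)^5 * a1 * a3 + 3280 * (j:ℚ)^5 * a1 * a2 + 1600 * (j:ℚ)^5 * a1^2 + 800 * (j:ℚ)^5 * a0 * a3 + 1600 * (j:ℚ)^5 * a0 * a2 + 800 * (j:ℚ)^5 * a0 * a1 + 80 * (j:ℚ)^6 * a2 * a3 + 160 * (j:ℚ)^6 * a2^2 + 160 * (j:ℚ)^6 * a1 * a3 + 328 * (j:ℚ)^6 * a1 * a2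 + 160 * (j:ℚ)^6 * a1^2 + 80 * (j:ℚ)^6 * a0 * a3 + 160 * (j:ℚ)^6 * a0 * a2 + 80 * (j:ℚ)^6 * a0 * a1 + 1872 * (n:ℚ) * a2 * a3 + 3744 * (n:ℚ) * a2^2 + 3744 * (n:ℚ) * a1 * a3 + 6624 * (n:ℚ) * a1 * a2 + 3744 * (n:ℚ) * a1^2 + 1872 * (n:ℚ) * a0 * a3 + 3744 * (n:ℚ) * a0 * a2 + 1872 * (n:ℚ) * a0 * a1 + 8112 * (n:ℚ) * (j:ℚ) * a2 * a3 + 16224 * (n:ℚ) * (j:ℚ) * a2^2 + 16224 * (n:ℚ) * (j:ℚ) * a1 * a3 + 28704 * (n:ℚ) * (j:ℚ) * a1 * a2 + 16224 * (n:ℚ) * (j:ℚ) * a1^2 + 8112 * (n:ℚ) * (j:ℚ) * a0 * a3 + 16224 * (n:ℚ) * (j:ℚ) * a0 * a2 + 8112 * (n:ℚ) * (j:ℚ) * a0 * a1 + 14196 * (n:ℚ) * (j:ℚ)^2 * a2 * a3 + 28392 * (n:ℚ) * (j:ℚ)^2 * a2^2 + 28392 * (n:ℚ) * (j:ℚ)^2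 * a1 * a3 + 50232 * (n:ℚ) * (j:ℚ)^2 * a1 * a2 + 28392 * (n:ℚ) * (j:ℚ)^2 * a1^2 + 14196 * (n:ℚ) * (j:ℚ)^2 * a0 * a3 + 28392 * (n:ℚ) * (j:ℚ)^2 * a0 * a2 + 14196 * (n:ℚ) * (j:ℚ)^2 * a0 * a1 + 12792 * (n:ℚ) * (j:ℚ)^3 * a2 * a3 + 25584 * (n:ℚ) * (j:ℚ)^3 * a2^2 + 25584 * (n:ℚ) * (j:ℚ)^3 * a1 * a3 + 45264 * (n:ℚ) * (j:ℚ)^3 * a1 * a2 + 25584 * (n:ℚ) * (j:ℚ)^3 * a1^2 + 12792 * (n:ℚ) * (j:ℚ)^3 * a0 * a3 + 25584 * (n:ℚ) * (j:ℚ)^3 * a0 * a2 + 12792 * (n:ℚ) * (j:ℚ)^3 * a0 * a1 + 6240 * (n:ℚ) * (j:ℚ)^4 * a2 * a3 + 12480 * (n:ℚ) * (j:ℚ)^4 * a2^2 + 12480 * (n:ℚ) * (j:ℚ)^4 * a1 * a3 + 22080 * (n:ℚ) * (j:ℚ)^4 * a1 * a2 + 12480 * (n:ℚ) * (j:ℚ)^4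 * a1^2 + 6240 * (n:ℚ) * (j:ℚ)^4 * a0 * a3 + 12480 * (n:ℚ) * (j:ℚ)^4 * a0 * a2 + 6240 * (n:ℚ) * (j:ℚ)^4 * a0 * a1 + 1560 * (n:ℚ) * (j:ℚ)^5 * a2 * a3 + 3120 * (n:ℚ) * (j:ℚ)^5 * a2^2 + 3120 * (n:ℚ) * (j:ℚ)^5 * a1 * a3 + 5520 * (n:ℚ) * (j:ℚ)^5 * a1 * a2 + 3120 * (n:ℚ) * (j:ℚ)^5 * a1^2 + 1560 * (n:ℚ) * (j:ℚ)^5 * a0 * a3 + 3120 * (n:ℚ) * (j:ℚ)^5 * a0 * a2 + 1560 * (n:ℚ) * (j:ℚ)^5 * a0 * a1 + 156 * (n:ℚ) * (j:ℚ)^6 * a2 * a3 + 312 * (n:ℚ) * (j:ℚ)^6 * a2^2 + 312 * (n:ℚ) * (j:ℚ)^6 * a1 * a3 + 552 * (n:ℚ) * (j:ℚ)^6 * a1 * a2 + 312 * (n:ℚ) * (j:ℚ)^6 * a1^2 + 156 * (n:ℚ) * (j:ℚ)^6 * a0 * a3 + 312 * (n:ℚ) * (j:ℚ)^6 * a0 *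 a2 + 156 * (n:ℚ) * (j:ℚ)^6 * a0 * a1 + 1176 * (n:ℚ)^2 * a2 * a3 + 2352 * (n:ℚ)^2 * a2^2 + 2352 * (n:ℚ)^2 * a1 * a3 + 2400 * (n:ℚ)^2 * a1 * a2 + 2352 * (n:ℚ)^2 * a1^2 + 1176 * (n:ℚ)^2 * a0 * a3 + 2352 * (n:ℚ)^2 * a0 * a2 + 1176 * (n:ℚ)^2 * a0 * a1 + 5096 * (n:ℚ)^2 * (j:ℚ) * a2 * a3 + 10192 * (n:ℚ)^2 * (j:ℚ) * a2^2 + 10192 * (n:ℚ)^2 * (j:ℚ) * a1 * a3 + 10400 * (n:ℚ)^2 * (j:ℚ) * a1 * a2 + 10192 * (n:ℚ)^2 * (j:ℚ) * a1^2 + 5096 * (n:ℚ)^2 * (j:ℚ) * a0 * a3 + 10192 * (n:ℚ)^2 * (j:ℚ) * a0 * a2 + 5096 * (n:ℚ)^2 * (j:ℚ) * a0 * a1 + 8918 * (n:ℚ)^2 * (j:ℚ)^2 * a2 * a3 + 17836 * (n:ℚ)^2 * (j:ℚ)^2 * a2^2 + 17836 * (n:ℚ)^2 * (j:ℚ)^2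 * a1 * a3 + 18200 * (n:ℚ)^2 * (j:ℚ)^2 * a1 * a2 + 17836 * (n:ℚ)^2 * (j:ℚ)^2 * a1^2 + 8918 * (n:ℚ)^2 * (j:ℚ)^2 * a0 * a3 + 17836 * (n:ℚ)^2 * (j:ℚ)^2 * a0 * a2 + 8918 * (n:ℚ)^2 * (j:ℚ)^2 * a0 * a1 + 8036 * (n:ℚ)^2 * (j:ℚ)^3 * a2 * a3 + 16072 * (n:ℚ)^2 * (j:ℚ)^3 * a2^2 + 16072 * (n:ℚ)^2 * (j:ℚ)^3 * a1 * a3 + 16400 * (n:ℚ)^2 * (j:ℚ)^3 * a1 * a2 + 16072 * (n:ℚ)^2 * (j:ℚ)^3 * a1^2 + 8036 * (n:ℚ)^2 * (j:ℚ)^3 * a0 * a3 + 16072 * (n:ℚ)^2 * (j:ℚ)^3 * a0 * a2 + 8036 * (n:ℚ)^2 * (j:ℚ)^3 * a0 * a1 + 3920 * (n:ℚ)^2 * (j:ℚ)^4 * a2 * a3 + 7840 * (n:ℚ)^2 * (j:ℚ)^4 * a2^2 + 7840 * (n:ℚ)^2 * (j:ℚ)^4 * a1 * a3 + 8000 * (n:ℚ)^2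 * (j:ℚ)^4 * a1 * a2 + 7840 * (n:ℚ)^2 * (j:ℚ)^4 * a1^2 + 3920 * (n:ℚ)^2 * (j:ℚ)^4 * a0 * a3 + 7840 * (n:ℚ)^2 * (j:ℚ)^4 * a0 * a2 + 3920 * (n:ℚ)^2 * (j:ℚ)^4 * a0 * a1 + 980 * (n:ℚ)^2 * (j:ℚ)^5 * a2 * a3 + 1960 * (n:ℚ)^2 * (j:ℚ)^5 * a2^2 + 1960 * (n:ℚ)^2 * (j:ℚ)^5 * a1 * a3 + 2000 * (n:ℚ)^2 * (j:ℚ)^5 * a1 * a2 + 1960 * (n:ℚ)^2 * (j:ℚ)^5 * a1^2 + 980 * (n:ℚ)^2 * (j:ℚ)^5 * a0 * a3 + 1960 * (n:ℚ)^2 * (j:ℚ)^5 * a0 * a2 + 980 * (n:ℚ)^2 * (j:ℚ)^5 * a0 * a1 + 98 * (n:ℚ)^2 * (j:ℚ)^6 * a2 * a3 + 196 * (n:ℚ)^2 * (j:ℚ)^6 * a2^2 + 196 * (n:ℚ)^2 * (j:ℚ)^6 * a1 * a3 + 200 * (n:ℚ)^2 * (j:ℚ)^6 * a1 * a2 + 196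 * (n:ℚ)^2 * (j:ℚ)^6 * a1^2 + 98 * (n:ℚ)^2 * (j:ℚ)^6 * a0 * a3 + 196 * (n:ℚ)^2 * (j:ℚ)^6 * a0 * a2 + 98 * (n:ℚ)^2 * (j:ℚ)^6 * a0 * a1 + 288 * (n:ℚ)^3 * a2 * a3 + 576 * (n:ℚ)^3 * a2^2 + 576 * (n:ℚ)^3 * a1 * a3 - 852 * (n:ℚ)^3 * a1 * a2 + 576 * (n:ℚ)^3 * a1^2 + 288 * (n:ℚ)^3 * a0 * a3 + 576 * (n:ℚ)^3 * a0 * a2 + 288 * (n:ℚ)^3 * a0 * a1 + 1248 * (n:ℚ)^3 * (j:ℚ) * a2 * a3 + 2496 * (n:ℚ)^3 * (j:ℚ) * a2^2 + 2496 * (n:ℚ)^3 * (j:ℚ) * a1 * a3 - 3692 * (n:ℚ)^3 * (j:ℚ) * a1 * a2 + 2496 * (n:ℚ)^3 * (j:ℚ) * a1^2 + 1248 * (n:ℚ)^3 * (j:ℚ) * a0 * a3 + 2496 * (n:ℚ)^3 * (j:ℚ) * a0 * a2 + 1248 * (n:ℚ)^3 * (j:ℚ) * a0 * a1 + 2184 *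 (n:ℚ)^3 * (j:ℚ)^2 * a2 * a3 + 4368 * (n:ℚ)^3 * (j:ℚ)^2 * a2^2 + 4368 * (n:ℚ)^3 * (j:ℚ)^2 * a1 * a3 - 6461 * (n:ℚ)^3 * (j:ℚ)^2 * a1 * a2 + 4368 * (n:ℚ)^3 * (j:ℚ)^2 * a1^2 + 2184 * (n:ℚ)^3 * (j:ℚ)^2 * a0 * a3 + 4368 * (n:ℚ)^3 * (j:ℚ)^2 * a0 * a2 + 2184 * (n:ℚ)^3 * (j:ℚ)^2 * a0 * a1 + 1968 * (n:ℚ)^3 * (j:ℚ)^3 * a2 * a3 + 3936 * (n:ℚ)^3 * (j:ℚ)^3 * a2^2 + 3936 * (n:ℚ)^3 * (j:ℚ)^3 * a1 * a3 - 5822 * (n:ℚ)^3 * (j:ℚ)^3 * a1 * a2 + 3936 * (n:ℚ)^3 * (j:ℚ)^3 * a1^2 + 1968 * (n:ℚ)^3 * (j:ℚ)^3 * a0 * a3 + 3936 * (n:ℚ)^3 * (j:ℚ)^3 * a0 * a2 + 1968 * (n:ℚ)^3 * (j:ℚ)^3 * a0 * a1 + 960 * (n:ℚ)^3 * (j:ℚ)^4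 * a2 * a3 + 1920 * (n:ℚ)^3 * (j:ℚ)^4 * a2^2 + 1920 * (n:ℚ)^3 * (j:ℚ)^4 * a1 * a3 - 2840 * (n:ℚ)^3 * (j:ℚ)^4 * a1 * a2 + 1920 * (n:ℚ)^3 * (j:ℚ)^4 * a1^2 + 960 * (n:ℚ)^3 * (j:ℚ)^4 * a0 * a3 + 1920 * (n:ℚ)^3 * (j:ℚ)^4 * a0 * a2 + 960 * (n:ℚ)^3 * (j:ℚ)^4 * a0 * a1 + 240 * (n:ℚ)^3 * (j:ℚ)^5 * a2 * a3 + 480 * (n:ℚ)^3 * (j:ℚ)^5 * a2^2 + 480 * (n:ℚ)^3 * (j:ℚ)^5 * a1 * a3 - 710 * (n:ℚ)^3 * (j:ℚ)^5 * a1 * a2 + 480 * (n:ℚ)^3 * (j:ℚ)^5 * a1^2 + 240 * (n:ℚ)^3 * (j:ℚ)^5 * a0 * a3 + 480 * (n:ℚ)^3 * (j:ℚ)^5 * a0 * a2 + 240 * (n:ℚ)^3 * (j:ℚ)^5 * a0 * a1 + 24 * (n:ℚ)^3 * (j:ℚ)^6 * a2 * a3 + 48 * (n:ℚ)^3 * (j:ℚ)^6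 * a2^2 + 48 * (n:ℚ)^3 * (j:ℚ)^6 * a1 * a3 - 71 * (n:ℚ)^3 * (j:ℚ)^6 * a1 * a2 + 48 * (n:ℚ)^3 * (j:ℚ)^6 * a1^2 + 24 * (n:ℚ)^3 * (j:ℚ)^6 * a0 * a3 + 48 * (n:ℚ)^3 * (j:ℚ)^6 * a0 * a2 + 24 * (n:ℚ)^3 * (j:ℚ)^6 * a0 * a1 + 24 * (n:ℚ)^4 * a2 * a3 + 48 * (n:ℚ)^4 * a2^2 + 48 * (n:ℚ)^4 * a1 * a3 - 708 * (n:ℚ)^4 * a1 * a2 + 48 * (n:ℚ)^4 * a1^2 + 24 * (n:ℚ)^4 * a0 * a3 + 48 * (n:ℚ)^4 * a0 * a2 + 24 * (n:ℚ)^4 * a0 * a1 + 104 * (n:ℚ)^4 * (j:ℚ) * a2 * a3 + 208 * (n:ℚ)^4 * (j:ℚ) * a2^2 + 208 * (n:ℚ)^4 * (j:ℚ) * a1 * a3 - 3068 * (n:ℚ)^4 * (j:ℚ) * a1 * a2 + 208 * (n:ℚ)^4 * (j:ℚ) * a1^2 + 104 * (n:ℚ)^4 * (j:ℚ) * a0 *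 a3 + 208 * (n:ℚ)^4 * (j:ℚ) * a0 * a2 + 104 * (n:ℚ)^4 * (j:ℚ) * a0 * a1 + 182 * (n:ℚ)^4 * (j:ℚ)^2 * a2 * a3 + 364 * (n:ℚ)^4 * (j:ℚ)^2 * a2^2 + 364 * (n:ℚ)^4 * (j:ℚ)^2 * a1 * a3 - 5369 * (n:ℚ)^4 * (j:ℚ)^2 * a1 * a2 + 364 * (n:ℚ)^4 * (j:ℚ)^2 * a1^2 + 182 * (n:ℚ)^4 * (j:ℚ)^2 * a0 * a3 + 364 * (n:ℚ)^4 * (j:ℚ)^2 * a0 * a2 + 182 * (n:ℚ)^4 * (j:ℚ)^2 * a0 * a1 + 164 * (n:ℚ)^4 * (j:ℚ)^3 * a2 * a3 + 328 * (n:ℚ)^4 * (j:ℚ)^3 * a2^2 + 328 * (n:ℚ)^4 * (j:ℚ)^3 * a1 * a3 - 4838 * (n:ℚ)^4 * (j:ℚ)^3 * a1 * a2 + 328 * (n:ℚ)^4 * (j:ℚ)^3 * a1^2 + 164 * (n:ℚ)^4 * (j:ℚ)^3 * a0 * a3 + 328 * (n:ℚ)^4 * (j:ℚ)^3 * a0 *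 a2 + 164 * (n:ℚ)^4 * (j:ℚ)^3 * a0 * a1 + 80 * (n:ℚ)^4 * (j:ℚ)^4 * a2 * a3 + 160 * (n:ℚ)^4 * (j:ℚ)^4 * a2^2 + 160 * (n:ℚ)^4 * (j:ℚ)^4 * a1 * a3 - 2360 * (n:ℚ)^4 * (j:ℚ)^4 * a1 * a2 + 160 * (n:ℚ)^4 * (j:ℚ)^4 * a1^2 + 80 * (n:ℚ)^4 * (j:ℚ)^4 * a0 * a3 + 160 * (n:ℚ)^4 * (j:ℚ)^4 * a0 * a2 + 80 * (n:ℚ)^4 * (j:ℚ)^4 * a0 * a1 + 20 * (n:ℚ)^4 * (j:ℚ)^5 * a2 * a3 + 40 * (n:ℚ)^4 * (j:ℚ)^5 * a2^2 + 40 * (n:ℚ)^4 * (j:ℚ)^5 * a1 * a3 - 590 * (n:ℚ)^4 * (j:ℚ)^5 * a1 * a2 + 40 * (n:ℚ)^4 * (j:ℚ)^5 * a1^2 + 20 * (n:ℚ)^4 * (j:ℚ)^5 * a0 * a3 + 40 * (n:ℚ)^4 * (j:ℚ)^5 * a0 * a2 + 20 * (n:ℚ)^4 * (j:ℚ)^5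 * a0 * a1 + 2 * (n:ℚ)^4 * (j:ℚ)^6 * a2 * a3 + 4 * (n:ℚ)^4 * (j:ℚ)^6 * a2^2 + 4 * (n:ℚ)^4 * (j:ℚ)^6 * a1 * a3 - 59 * (n:ℚ)^4 * (j:ℚ)^6 * a1 * a2 + 4 * (n:ℚ)^4 * (j:ℚ)^6 * a1^2 + 2 * (n:ℚ)^4 * (j:ℚ)^6 * a0 * a3 + 4 * (n:ℚ)^4 * (j:ℚ)^6 * a0 * a2 + 2 * (n:ℚ)^4 * (j:ℚ)^6 * a0 * a1 - 156 * (n:ℚ)^5 * a1 * a2 - 676 * (n:ℚ)^5 * (j:ℚ) * a1 * a2 - 1183 * (n:ℚ)^5 * (j:ℚ)^2 * a1 * a2 - 1066 * (n:ℚ)^5 * (j:ℚ)^3 * a1 * a2 - 520 * (n:ℚ)^5 * (j:ℚ)^4 * a1 * a2 - 130 * (n:ℚ)^5 * (j:ℚ)^5 * a1 * a2 - 13 * (n:ℚ)^5 * (j:ℚ)^6 * a1 * a2 - 12 * (n:ℚ)^6 * a1 * a2 - 52 * (n:ℚ)^6 * (j:ℚ) * a1 * a2 - 91 * (n:ℚ)^6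 * (j:ℚ)^2 * a1 * a2 - 82 * (n:ℚ)^6 * (j:ℚ)^3 * a1 * a2 - 40 * (n:ℚ)^6 * (j:ℚ)^4 * a1 * a2 - 10 * (n:ℚ)^6 * (j:ℚ)^5 * a1 * a2 - 1 * (n:ℚ)^6 * (j:ℚ)^6 * a1 * a2) * h4

set_option maxHeartbeats 800000 in
lemma base (n : ℕ) :
    2 * ((n : ℚ) + 1) * ((n : ℚ) + 2) * ((n : ℚ) + 4) * ((n : ℚ) + 5) * Fq (n + 2) 0
      - 2 * (7 * (n : ℚ) ^ 2 + 35 * (n : ℚ) + 40) * ((n : ℚ) + 3) ^ 2 * Fq (n + 1) 0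
      - 16 * ((n : ℚ) + 2) ^ 2 * ((n : ℚ) + 3) ^ 2 * Fq n 0
    = ((n : ℚ) + 2) ^ 2 * ((n : ℚ) + 3) ^ 2 * Wq n 0 := by
  have en1 : n + 2 + 1 = n + 3 := by omega
  have en2 : n + 1 + 1 = n + 2 := by omega
  simp only [Fq, Wq, en1, en2, Nat.zero_add, Nat.choose_zero_right, Nat.choose_one_right]
  rw [ch2 (n + 3), ch2 (n + 2), ch2 (n + 1)]
  push_cast
  ring

lemma top (n : ℕ) : Wq n (n + 1) = 0 := by
  have h1 : (n + 1).choose (n + 1 + 1) = 0 := Nat.choose_eq_zero_of_lt (by omega)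
  have h2 : (n + 1).choose (n + 1 + 2) = 0 := Nat.choose_eq_zero_of_lt (by omega)
  have h3 : (n + 2).choose (n + 1 + 2) = 0 := Nat.choose_eq_zero_of_lt (by omega)
  simp [Wq, h1, h2, h3]

lemma hsum (n : ℕ) :
    ∑ i ∈ Finset.range (n + 2),
      (2 * ((n : ℚ) + 1) * ((n : ℚ) + 2) * ((n : ℚ) + 4) * ((n : ℚ) + 5) * Fq (n + 2) i
        - 2 * (7 * (n : ℚ) ^ 2 + 35 * (n : ℚ) + 40) * ((n : ℚ) + 3) ^ 2 * Fq (n + 1) i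
        - 16 * ((n : ℚ) + 2) ^ 2 * ((n : ℚ) + 3) ^ 2 * Fq n i) = 0 := by
  rw [Finset.sum_range_succ']
  have tele := Finset.sum_range_sub (fun i => Wq n i) (n + 1)
  have step : ∀ i ∈ Finset.range (n + 1),
      (2 * ((n : ℚ) + 1) * ((n : ℚ) + 2) * ((n : ℚ) + 4) * ((n : ℚ) + 5) * Fq (n + 2) (i + 1)
        - 2 * (7 * (n : ℚ) ^ 2 + 35 * (n : ℚ) + 40) * ((n : ℚ) + 3) ^ 2 * Fq (n + 1) (i + 1)
        - 16 * ((n : ℚ) + 2) ^ 2 * ((n : ℚ) + 3) ^ 2 * Fq n (i + 1))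
      = ((n : ℚ) + 2) ^ 2 * ((n : ℚ) + 3) ^ 2 * (Wq n (i + 1) - Wq n i) := by
    intro i hi
    exact key n i (Nat.lt_succ_iff.mp (Finset.mem_range.mp hi))
  rw [Finset.sum_congr rfl step, ← Finset.mul_sum, tele, top n, base n]
  ring

lemma ext0 (n : ℕ) : ∑ i ∈ Finset.range n, Fq n i = ∑ i ∈ Finset.range (n + 2), Fq n i := by
  have hsub : Finset.range n ⊆ Finset.range (n + 2) := Finset.range_subset_range.mpr (by omega)
  refine Finset.sum_subset hsub fun i _ hi => ?_
  have hni : n ≤ i := by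
    by_contra hc
    exact hi (Finset.mem_range.mpr (by omega))
  have : n + 1 < i + 2 := by omega
  simp [Fq, Nat.choose_eq_zero_of_lt this]

lemma ext1 (n : ℕ) :
    ∑ i ∈ Finset.range (n + 1), Fq (n + 1) i = ∑ i ∈ Finset.range (n + 2), Fq (n + 1) i := by
  have hsub : Finset.range (n + 1) ⊆ Finset.range (n + 2) := Finset.range_subset_range.mpr (by omega)
  refine Finset.sum_subset hsub fun i _ hi => ?_
  have hni : n + 1 ≤ i := by
    by_contra hc
    exact hi (Finset.mem_range.mpr (by omega))
  have : n + 1 + 1 < i + 2 := by omega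
  simp [Fq, Nat.choose_eq_zero_of_lt this]

end BaxterAux

open BaxterAux in
theorem baxter_recurrence (n : ℕ) (hn : 1 ≤ n) :
    ((n : ℚ) + 4) * ((n : ℚ) + 5) * baxter (n + 2) =
      (7 * (n : ℚ) ^ 2 + 35 * (n : ℚ) + 40) * baxter (n + 1) +
        8 * (n : ℚ) * ((n : ℚ) + 1) * baxter n := by
  have hq : (1 : ℚ) ≤ (n : ℚ) := by exact_mod_cast hn
  have hs : 2 * ((n : ℚ) + 1) * ((n : ℚ) + 2) * ((n : ℚ) + 4) * ((n : ℚ) + 5) *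
        (∑ i ∈ Finset.range (n + 2), Fq (n + 2) i)
      - 2 * (7 * (n : ℚ) ^ 2 + 35 * (n : ℚ) + 40) * ((n : ℚ) + 3) ^ 2 *
        (∑ i ∈ Finset.range (n + 2), Fq (n + 1) i)
      - 16 * ((n : ℚ) + 2) ^ 2 * ((n : ℚ) + 3) ^ 2 *
        (∑ i ∈ Finset.range (n + 2), Fq n i) = 0 := by
    rw [Finset.mul_sum, Finset.mul_sum, Finset.mul_sum, ← Finset.sum_sub_distrib,
      ← Finset.sum_sub_distrib]
    exact hsum n
  have e2 : baxter (n + 2)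
      = 2 / (((n : ℚ) + 2) * ((n : ℚ) + 3) ^ 2) * ∑ i ∈ Finset.range (n + 2), Fq (n + 2) i := by
    have h := baxter_eq (n + 2)
    push_cast at h
    convert h using 3 <;> push_cast <;> ring
  have e1 : baxter (n + 1)
      = 2 / (((n : ℚ) + 1) * ((n : ℚ) + 2) ^ 2) * ∑ i ∈ Finset.range (n + 2), Fq (n + 1) i := by
    have h := baxter_eq (n + 1)
    push_cast at h
    rw [← ext1 n]
    convert h using 3 <;> push_cast <;> ring
  have e0 : baxter n
      = 2 / ((n : ℚ) * ((n : ℚ) + 1) ^ 2) * ∑ i ∈ Finset.range (n + 2), Fq n i := by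
    rw [baxter_eq n, ← ext0 n]
  rw [e2, e1, e0]
  have d0 : (n : ℚ) ≠ 0 := by linarith
  have d1 : (n : ℚ) + 1 ≠ 0 := by linarith
  have d2 : (n : ℚ) + 2 ≠ 0 := by linarith
  have d3 : (n : ℚ) + 3 ≠ 0 := by linarith
  have d4 : (n : ℚ) + 4 ≠ 0 := by linarith
  have d5 : (n : ℚ) + 5 ≠ 0 := by linarith
  have hT2v : (∑ i ∈ Finset.range (n + 2), Fq (n + 2) i)
      = ((7 * (n : ℚ) ^ 2 + 35 * (n : ℚ) + 40) * ((n : ℚ) + 3) ^ 2 *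
          (∑ i ∈ Finset.range (n + 2), Fq (n + 1) i)
        + 8 * ((n : ℚ) + 2) ^ 2 * ((n : ℚ) + 3) ^ 2 *
          (∑ i ∈ Finset.range (n + 2), Fq n i))
      / (((n : ℚ) + 1) * ((n : ℚ) + 2) * ((n : ℚ) + 4) * ((n : ℚ) + 5)) := by
    rw [eq_div_iff (by positivity)]
    linarith [hs]
  rw [hT2v]
  field_simp
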